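/- arXiv:1407.6427 — 2 statements merged into one kernel-verified Lean document; each statement's English description precedes it below -/
import Mathlib

section
/- Let A be an abelian group. Let C = ∏_{n≥1} A^n, let β : C → C be the automorphism acting on each factor A^n by the cyclic shift β_n(a_1,…,a_n) = (a_n, a_1, …, a_{n-1}), and let D ≤ C be the subgroup of elements (a^n_j) for which, for each n, a^n_j is independent of j (i.e. a^n_j = c_n for some c_n ∈ A). Then the quotient C/(im(1−β) + D) is isomorphic to ∏_{n≥1} A/nA; the isomorphism is induced by the map (a^n_j) ↦ (Σ_{j=1}^n a^n_j mod nA)_{n≥1}. In particular, if A is divisible then C/(im(1−β) + D) = 0. -/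
/-- `C = ∏_{n ≥ 1} Aⁿ`: the `n`-th factor (`n ≥ 1`) is `Aⁿ`, realised as `Fin n → A`;
we index by `m : ℕ`, the factor at `m` being `A^{m+1}`. -/
abbrev ProdPowers (A : Type) [AddCommGroup A] : Type := ∀ m : ℕ, Fin (m + 1) → A

/-- The automorphism `β` of `C` acting on each factor `Aⁿ` by the cyclic shift
`βₙ(a₁,…,aₙ) = (aₙ, a₁, …, a_{n−1})`, i.e. `(βa)ⁿ_i = aⁿ_{i−1 (mod n)}`. -/
def cyclicShift (A : Type) [AddCommGroup A] : ProdPowers A →+ ProdPowers A where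
  toFun a := fun m i => a m (i - 1)
  map_zero' := rfl
  map_add' _ _ := rfl

/-- The subgroup `D ≤ C` of tuples `(aⁿ_j)` with `aⁿ_j` independent of `j`. -/
def constantTuples (A : Type) [AddCommGroup A] : AddSubgroup (ProdPowers A) where
  carrier := {a | ∀ (m : ℕ) (i j : Fin (m + 1)), a m i = a m j}
  add_mem' := by
    intro a b ha hb m i j
    show a m i + b m i = a m j + b m j
    rw [ha m i j, hb m i j]
  zero_mem' := fun _ _ _ => rfl
  neg_mem' := by
    intro a ha m i j
    show -(a m i) = -(a m j)
    rw [ha m i j]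

/-- The subgroup `nA = {n·a : a ∈ A}` of an abelian group `A`. -/
def nMultiples (A : Type) [AddCommGroup A] (n : ℕ) : AddSubgroup A where
  carrier := {x | ∃ a : A, n • a = x}
  add_mem' := by
    rintro x y ⟨a, ha⟩ ⟨b, hb⟩
    exact ⟨a + b, by rw [smul_add, ha, hb]⟩
  zero_mem' := ⟨0, smul_zero n⟩
  neg_mem' := by
    rintro x ⟨a, ha⟩
    exact ⟨-a, by rw [smul_neg, ha]⟩

open Finset in
/-- telescoping: if the total sum is zero, partial sums give a preimage under `1 - shift`. -/
lemma telescope {A : Type} [AddCommGroup A] (n : ℕ) (x : Fin (n+1) → A)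
    (hx : ∑ j, x j = 0) (j : Fin (n+1)) :
    (∑ i ∈ Iic j, x i) - (∑ i ∈ Iic (j - 1), x i) = x j := by
  by_cases hj : j = 0
  · subst hj
    have h1 : (0 - 1 : Fin (n+1)) = Fin.last n := by simp [Fin.ext_iff, Fin.coe_sub_one]
    have h2 : Finset.Iic (Fin.last n) = Finset.univ := by ext i; simp [Fin.le_last]
    have h3 : Finset.Iic (0 : Fin (n+1)) = {0} := by ext i; simp [Fin.le_zero_iff]
    rw [h1, h2, h3, hx, sum_singleton, sub_zero]
  · have hj' : 0 < j.val := Fin.pos_of_ne_zero hj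
    have h4 : Finset.Iio j = Finset.Iic (j - 1) := by
      ext i
      rw [Finset.mem_Iio, Finset.mem_Iic, Fin.lt_iff_val_lt_val, Fin.le_iff_val_le_val,
        Fin.coe_sub_one, if_neg hj]
      omega
    rw [← h4, ← Finset.Iio_insert j, Finset.sum_insert Finset.notMem_Iio_self]
    abel


open Finset in
/-- **Statement 16.** Let `A` be an abelian group, `C = ∏_{n≥1} Aⁿ`, `β : C → C` the
product of the cyclic shifts, and `D ≤ C` the subgroup of tuples constant at each
level.  Then `C/(im(1−β) + D) ≅ ∏_{n≥1} A/nA`, the isomorphism being induced by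
`(aⁿ_j) ↦ (Σ_{j=1}ⁿ aⁿ_j mod nA)_{n≥1}`.  In particular, if `A` is divisible then
`C/(im(1−β) + D) = 0`. -/
theorem quotient_by_shift_and_constants (A : Type) [AddCommGroup A] :
    (∃ e : (ProdPowers A ⧸
        ((AddMonoidHom.id (ProdPowers A) - cyclicShift A).range ⊔ constantTuples A)) ≃+
        (∀ m : ℕ, A ⧸ nMultiples A (m + 1)),
      ∀ a : ProdPowers A, e (QuotientAddGroup.mk a) =
        fun m => QuotientAddGroup.mk (∑ j, a m j)) ∧
    ((∀ n : ℕ, n ≠ 0 → Function.Surjective fun a : A => n • a) →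
      ∀ x : ProdPowers A ⧸
        ((AddMonoidHom.id (ProdPowers A) - cyclicShift A).range ⊔ constantTuples A),
        x = 0) := by
  classical
  set N : AddSubgroup (ProdPowers A) :=
    (AddMonoidHom.id (ProdPowers A) - cyclicShift A).range ⊔ constantTuples A with hN
  -- the summation map φ
  let φ : ProdPowers A →+ (∀ m : ℕ, A ⧸ nMultiples A (m + 1)) :=
  { toFun := fun a m => QuotientAddGroup.mk (∑ j, a m j)
    map_zero' := by funext m; simp
    map_add' := by
      intro a b
      funext m
      show QuotientAddGroup.mk (∑ j, (a m j + b m j)) = _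
      rw [Finset.sum_add_distrib]
      rfl }
  have hφ : ∀ (a : ProdPowers A) (m : ℕ), φ a m = QuotientAddGroup.mk (∑ j, a m j) :=
    fun _ _ => rfl
  -- N ≤ ker φ
  have hNker : N ≤ φ.ker := by
    rw [hN, sup_le_iff]
    constructor
    · rintro _ ⟨b, rfl⟩
      rw [AddMonoidHom.mem_ker]
      funext m
      show QuotientAddGroup.mk (∑ j, (b m j - b m (j - 1))) = 0
      have : ∑ j, (b m j - b m (j - 1)) = 0 := by
        rw [Finset.sum_sub_distrib, sub_eq_zero]
        exact (Fintype.sum_equiv (Equiv.subRight (1 : Fin (m + 1))) _ _ (fun j => rfl)).symm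
      rw [this]; rfl
    · intro a ha
      rw [AddMonoidHom.mem_ker]
      funext m
      show QuotientAddGroup.mk (∑ j, a m j) = 0
      rw [QuotientAddGroup.eq_zero_iff]
      refine ⟨a m 0, ?_⟩
      have : ∑ j, a m j = ∑ _j : Fin (m + 1), a m 0 :=
        Finset.sum_congr rfl fun j _ => ha m j 0
      rw [this, Finset.sum_const, Finset.card_univ, Fintype.card_fin]
  -- ker φ ≤ N
  have hkerN : φ.ker ≤ N := by
    intro a ha
    rw [AddMonoidHom.mem_ker] at ha
    have hm : ∀ m : ℕ, ∃ c : A, (m + 1) • c = ∑ j, a m j := by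
      intro m
      have := congrFun ha m
      rw [hφ] at this
      exact (QuotientAddGroup.eq_zero_iff _).1 this
    choose c hc using hm
    set d : ProdPowers A := fun m _ => c m with hd
    set x : ProdPowers A := a - d with hx
    have hxsum : ∀ m : ℕ, ∑ j, x m j = 0 := by
      intro m
      show ∑ j, (a m j - c m) = 0
      rw [Finset.sum_sub_distrib, Finset.sum_const, Finset.card_univ, Fintype.card_fin,
        hc m, sub_self]
    set b : ProdPowers A := fun m j => ∑ i ∈ Iic j, x m i with hb
    have hxmem : x ∈ (AddMonoidHom.id (ProdPowers A) - cyclicShift A).range := by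
      refine ⟨b, ?_⟩
      funext m j
      exact telescope m (x m) (hxsum m) j
    have hdmem : d ∈ constantTuples A := fun m i j => rfl
    have : a = x + d := by rw [hx]; abel
    rw [this, hN]
    exact AddSubgroup.add_mem _ (AddSubgroup.mem_sup_left hxmem)
      (AddSubgroup.mem_sup_right hdmem)
  have hker : φ.ker = N := le_antisymm hkerN hNker
  -- φ surjective
  have hsurj : Function.Surjective φ := by
    intro q
    refine ⟨fun m i => if i = 0 then Quotient.out (q m) else 0, ?_⟩
    funext m
    rw [hφ]
    have : ∑ j : Fin (m + 1), (if j = 0 then Quotient.out (q m) else 0) = Quotient.out (q m) := by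
      rw [Finset.sum_ite_eq' Finset.univ (0 : Fin (m + 1))]
      simp
    rw [this]
    exact QuotientAddGroup.out_eq' (q m)
  -- build the equivalence
  let ψ : (ProdPowers A ⧸ N) →+ (∀ m : ℕ, A ⧸ nMultiples A (m + 1)) :=
    QuotientAddGroup.lift N φ (fun a haN => hker ▸ haN)
  have hψ : ∀ a : ProdPowers A, ψ (QuotientAddGroup.mk a) = φ a := fun _ => rfl
  have hinj : Function.Injective ψ := by
    rw [injective_iff_map_eq_zero]
    intro y hy
    induction y using QuotientAddGroup.induction_on with
    | H a =>
      rw [hψ] at hy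
      exact (QuotientAddGroup.eq_zero_iff a).2 (hker ▸ (AddMonoidHom.mem_ker.2 hy))
  have hsurj' : Function.Surjective ψ := fun q => by
    obtain ⟨a, ha⟩ := hsurj q
    exact ⟨QuotientAddGroup.mk a, by rw [hψ, ha]⟩
  let e : (ProdPowers A ⧸ N) ≃+ (∀ m : ℕ, A ⧸ nMultiples A (m + 1)) :=
    AddEquiv.ofBijective ψ ⟨hinj, hsurj'⟩
  have he : ∀ a : ProdPowers A, e (QuotientAddGroup.mk a) =
      fun m => QuotientAddGroup.mk (∑ j, a m j) := fun a => rfl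
  constructor
  · exact ⟨e, he⟩
  · intro hdiv y
    apply hinj
    rw [map_zero]
    induction y using QuotientAddGroup.induction_on with
    | H a =>
      rw [hψ]
      funext m
      rw [Pi.zero_apply, hφ, QuotientAddGroup.eq_zero_iff]
      obtain ⟨w, hw⟩ := hdiv (m + 1) (Nat.succ_ne_zero m) (∑ j, a m j)
      exact ⟨w, hw⟩
end

section
/- Let ∂₂ : ℤ^6 → ℤ^5 be the ℤ-linear map defined on the standard basis (indexed by the squares f₀g₀, f₀g₁, f₀g₂, f₁g₀, f₁g₁, f₁g₂, with target basis indexed by f₀, f₁, g₀, g₁, g₂) by: ∂₂(f₀g₀) = f₀ + g₀ − g₁ − f₁, ∂₂(f₁g₀) = f₁ + g₀ − g₁ − f₀, ∂₂(f₀g₁) = f₀ + g₁ − g₂ − f₁, ∂₂(f₁g₁) = f₁ + g₁ − g₂ − f₀, ∂₂(f₀g₂) = f₀ + g₂ − g₀ − f₁, ∂₂(f₁g₂) = f₁ + g₂ − g₀ − f₀. Then ker ∂₂ is a free abelian group of rank 3 (with generators b₁ = f₀g₀ + f₁g₀ + 2f₁g₁ + 2f₀g₂, b₂ = −2f₀g₀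 + f₀g₁ − 3f₁g₁ − 2f₀g₂, b₃ = 2f₀g₀ + 2f₁g₁ + f₀g₂ + f₁g₂), and the quotient ℤ^5 / im ∂₂ is a free abelian group of rank 2, with im ∂₂ generated by f₀ − f₁ + g₀ − g₁, g₀ − g₂, and g₁ − g₂. -/
/-- The cubical boundary map `∂₂ : ℤ⁶ → ℤ⁵` of the 2-graph `𝔽_θ⁺`, as the linear map
given by the matrix whose columns (indexed by the squares
`f₀g₀, f₀g₁, f₀g₂, f₁g₀, f₁g₁, f₁g₂`) record the boundaries
`∂₂(f₀g₀) = f₀ + g₀ − g₁ − f₁`, `∂₂(f₀g₁) = f₀ + g₁ − g₂ − f₁`,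
`∂₂(f₀g₂) = f₀ + g₂ − g₀ − f₁`, `∂₂(f₁g₀) = f₁ + g₀ − g₁ − f₀`,
`∂₂(f₁g₁) = f₁ + g₁ − g₂ − f₀`, `∂₂(f₁g₂) = f₁ + g₂ − g₀ − f₀`
in the target basis `f₀, f₁, g₀, g₁, g₂`. -/
def partialTwo : (Fin 6 → ℤ) →ₗ[ℤ] (Fin 5 → ℤ) :=
  Matrix.mulVecLin
    !![1, 1, 1, -1, -1, -1;
       -1, -1, -1, 1, 1, 1;
       1, 0, -1, 1, 0, -1;
       -1, 1, 0, -1, 1, 0;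
       0, -1, 1, 0, -1, 1]

section
variable {α : Type*}
lemma cv60 (a0 a1 a2 a3 a4 a5 : α) : ![a0,a1,a2,a3,a4,a5] 0 = a0 := rfl
lemma cv61 (a0 a1 a2 a3 a4 a5 : α) : ![a0,a1,a2,a3,a4,a5] 1 = a1 := rfl
lemma cv62 (a0 a1 a2 a3 a4 a5 : α) : ![a0,a1,a2,a3,a4,a5] 2 = a2 := rfl
lemma cv63 (a0 a1 a2 a3 a4 a5 : α) : ![a0,a1,a2,a3,a4,a5] 3 = a3 := rfl
lemma cv64 (a0 a1 a2 a3 a4 a5 : α) : ![a0,a1,a2,a3,a4,a5] 4 = a4 := rfl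
lemma cv65 (a0 a1 a2 a3 a4 a5 : α) : ![a0,a1,a2,a3,a4,a5] 5 = a5 := rfl
lemma cv50 (a0 a1 a2 a3 a4 : α) : ![a0,a1,a2,a3,a4] 0 = a0 := rfl
lemma cv51 (a0 a1 a2 a3 a4 : α) : ![a0,a1,a2,a3,a4] 1 = a1 := rfl
lemma cv52 (a0 a1 a2 a3 a4 : α) : ![a0,a1,a2,a3,a4] 2 = a2 := rfl
lemma cv53 (a0 a1 a2 a3 a4 : α) : ![a0,a1,a2,a3,a4] 3 = a3 := rfl
lemma cv54 (a0 a1 a2 a3 a4 : α) : ![a0,a1,a2,a3,a4] 4 = a4 := rfl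
end

/-- the 5×6 boundary matrix -/
def Mb : Matrix (Fin 5) (Fin 6) ℤ :=
  !![1, 1, 1, -1, -1, -1;
     -1, -1, -1, 1, 1, 1;
     1, 0, -1, 1, 0, -1;
     -1, 1, 0, -1, 1, 0;
     0, -1, 1, 0, -1, 1]

lemma partialTwo_eq : partialTwo = Mb.mulVecLin := rfl

/-- matrix with columns the kernel generators b₁, b₂, b₃ -/
def Bm : Matrix (Fin 6) (Fin 3) ℤ :=
  !![1,-2,2; 0,1,0; 2,-2,1; 1,0,0; 2,-3,2; 0,0,1]

/-- projection picking coordinates 3, 1, 5 -/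
def Pm : Matrix (Fin 3) (Fin 6) ℤ :=
  !![0,0,0,1,0,0; 0,1,0,0,0,0; 0,0,0,0,0,1]

/-- certificate: B*P = 1 + C*M -/
def Cm : Matrix (Fin 6) (Fin 5) ℤ :=
  !![-1,0,-1,-1,0; 0,0,0,0,0; -1,0,0,-1,0; 0,0,0,0,0; -1,0,-1,-2,0; 0,0,0,0,0]

private lemma key1 (v : Fin 6 → ℤ) (h : partialTwo v = 0) :
    v = v 3 • ![1, 0, 2, 1, 2, 0] + v 1 • ![-2, 1, -2, 0, -3, 0] + v 5 • ![2, 0, 1, 0, 2, 1] := by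
  have h0 := congrFun h 0
  have h2 := congrFun h 2
  have h3 := congrFun h 3
  have h4 := congrFun h 4
  simp [partialTwo, Matrix.mulVecLin_apply, Matrix.mulVec, dotProduct,
    Fin.sum_univ_six, cv60, cv61, cv62, cv63, cv64, cv65] at h0 h2 h3 h4
  funext i
  fin_cases i <;> simp [cv60, cv61, cv62, cv63, cv64, cv65] <;> omega

private lemma jmem (x : Fin 3 → ℤ) : Bm.mulVecLin x ∈ LinearMap.ker partialTwo := by
  rw [LinearMap.mem_ker, partialTwo_eq, Matrix.mulVecLin_apply, Matrix.mulVecLin_apply,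
    Matrix.mulVec_mulVec, show Mb * Bm = 0 by decide, Matrix.zero_mulVec]

/-- **Statement 17.** The kernel of `∂₂` is free abelian of rank `3`, with generators
`b₁ = f₀g₀ + f₁g₀ + 2f₁g₁ + 2f₀g₂`, `b₂ = −2f₀g₀ + f₀g₁ − 3f₁g₁ − 2f₀g₂`,
`b₃ = 2f₀g₀ + 2f₁g₁ + f₀g₂ + f₁g₂`, and the quotient `ℤ⁵/im ∂₂` is free abelian of
rank `2`, with `im ∂₂` generated by `f₀ − f₁ + g₀ − g₁`, `g₀ − g₂` and `g₁ − g₂`.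
(Coordinates on `ℤ⁶` are taken in the basis `f₀g₀, f₀g₁, f₀g₂, f₁g₀, f₁g₁, f₁g₂` and
on `ℤ⁵` in the basis `f₀, f₁, g₀, g₁, g₂`.) -/
theorem kernel_and_cokernel_of_partialTwo :
    LinearMap.ker partialTwo =
      Submodule.span ℤ {![1, 0, 2, 1, 2, 0], ![-2, 1, -2, 0, -3, 0],
        ![2, 0, 1, 0, 2, 1]} ∧
    Nonempty (LinearMap.ker partialTwo ≃ₗ[ℤ] (Fin 3 → ℤ)) ∧
    LinearMap.range partialTwo =
      Submodule.span ℤ {![1, -1, 1, -1, 0], ![0, 0, 1, 0, -1], ![0, 0, 0, 1, -1]} ∧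
    Nonempty (((Fin 5 → ℤ) ⧸ LinearMap.range partialTwo) ≃ₗ[ℤ] (Fin 2 → ℤ)) := by
  have hker : LinearMap.ker partialTwo =
      Submodule.span ℤ {![1, 0, 2, 1, 2, 0], ![-2, 1, -2, 0, -3, 0], ![2, 0, 1, 0, 2, 1]} := by
    apply le_antisymm
    · intro v hv
      rw [LinearMap.mem_ker] at hv
      rw [key1 v hv]
      refine Submodule.add_mem _ (Submodule.add_mem _ ?_ ?_) ?_ <;>
        exact Submodule.smul_mem _ _ (Submodule.subset_span (by simp))
    · rw [Submodule.span_le]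
      rintro x (rfl | rfl | rfl) <;> exact LinearMap.mem_ker.mpr (by decide)
  have hrange : LinearMap.range partialTwo =
      Submodule.span ℤ {![1, -1, 1, -1, 0], ![0, 0, 1, 0, -1], ![0, 0, 0, 1, -1]} := by
    apply le_antisymm
    · rintro _ ⟨x, rfl⟩
      have : partialTwo x =
          (x 0 + x 1 + x 2 - x 3 - x 4 - x 5) • ![1, -1, 1, -1, 0] +
          (-(x 1) - 2 * x 2 + 2 * x 3 + x 4) • ![0, 0, 1, 0, -1] +
          (2 * x 1 + x 2 - 2 * x 3 - x 5) • ![0, 0, 0, 1, -1] := by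
        funext i
        fin_cases i <;>
          simp [partialTwo, Matrix.mulVecLin_apply, Matrix.mulVec, dotProduct,
            Fin.sum_univ_six, cv60, cv61, cv62, cv63, cv64, cv65,
            cv50, cv51, cv52, cv53, cv54] <;> ring
      rw [this]
      refine Submodule.add_mem _ (Submodule.add_mem _ ?_ ?_) ?_ <;>
        exact Submodule.smul_mem _ _ (Submodule.subset_span (by simp))
    · rw [Submodule.span_le]
      rintro x (rfl | rfl | rfl)
      · exact ⟨![1,0,0,0,0,0], by decide⟩
      · exact ⟨![1,0,0,0,1,0], by decide⟩
      · exact ⟨![-1,0,0,0,0,-1], by decide⟩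
  refine ⟨hker, ⟨?_⟩, hrange, ⟨?_⟩⟩
  · -- kernel ≃ ℤ³
    refine LinearEquiv.ofLinear (Pm.mulVecLin ∘ₗ (LinearMap.ker partialTwo).subtype)
      (Bm.mulVecLin.codRestrict _ jmem) ?_ ?_
    · apply LinearMap.ext
      intro x
      show Pm.mulVecLin (Bm.mulVecLin x) = x
      rw [Matrix.mulVecLin_apply, Matrix.mulVecLin_apply, Matrix.mulVec_mulVec,
        show Pm * Bm = 1 by decide, Matrix.one_mulVec]
    · apply LinearMap.ext
      rintro ⟨v, hv⟩
      have hv' : Mb.mulVec v = 0 := hv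
      apply Subtype.ext
      show Bm.mulVecLin (Pm.mulVecLin v) = v
      rw [Matrix.mulVecLin_apply, Matrix.mulVecLin_apply, Matrix.mulVec_mulVec,
        show Bm * Pm = 1 + Cm * Mb by decide, Matrix.add_mulVec, Matrix.one_mulVec,
        ← Matrix.mulVec_mulVec, hv', Matrix.mulVec_zero, add_zero]
  · -- cokernel ≃ ℤ²
    set phimap : (Fin 5 → ℤ) →ₗ[ℤ] (Fin 2 → ℤ) :=
      (Matrix.mulVecLin !![1,1,0,0,0; 0,0,1,1,1]) with hphi
    have hkphi : LinearMap.ker phimap =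
        Submodule.span ℤ {![1, -1, 1, -1, 0], ![0, 0, 1, 0, -1], ![0, 0, 0, 1, -1]} := by
      apply le_antisymm
      · intro x hx
        rw [LinearMap.mem_ker] at hx
        have h0 := congrFun hx 0
        have h1 := congrFun hx 1
        simp [hphi, Matrix.mulVecLin_apply, Matrix.mulVec, dotProduct,
          Fin.sum_univ_five, cv50, cv51, cv52, cv53, cv54] at h0 h1
        have : x = x 0 • ![1, -1, 1, -1, 0] + (x 2 - x 0) • ![0, 0, 1, 0, -1] +
            (x 0 + x 3) • ![0, 0, 0, 1, -1] := by
          funext i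
          fin_cases i <;> simp [cv50, cv51, cv52, cv53, cv54] <;> omega
        rw [this]
        refine Submodule.add_mem _ (Submodule.add_mem _ ?_ ?_) ?_ <;>
          exact Submodule.smul_mem _ _ (Submodule.subset_span (by simp))
      · rw [Submodule.span_le]
        rintro x (rfl | rfl | rfl) <;> exact LinearMap.mem_ker.mpr (by decide)
    have hsurj : Function.Surjective phimap := by
      intro y
      refine ⟨![y 0, 0, y 1, 0, 0], ?_⟩
      funext i
      fin_cases i <;>
        simp [hphi, Matrix.mulVecLin_apply, Matrix.mulVec, dotProduct,
          Fin.sum_univ_five, cv50, cv51, cv52, cv53, cv54]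
    exact (Submodule.quotEquivOfEq _ _ (by rw [hrange, hkphi])).trans
      (phimap.quotKerEquivOfSurjective hsurj)
end
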